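/- Let (M, θ) be a manifold with a contact form with contact distribution 𝓗 = ker θ and Reeb vector field E. Suppose g is a Riemannian metric on M such that g restricted to each 𝓗_p is compatible with dθ|_{𝓗_p} (i.e. there is an endomorphism I of 𝓗_p with dθ(X, I Y) = g(X, Y) for X, Y ∈ 𝓗_p and I² = −Id), E has unit length, and E is g-orthogonal to 𝓗. Endow M × ℝ with the product of g and the standard metric ds ⊗ ds on ℝ. Then the 2-form ω̄ := ds ∧ θ + dθ on M × ℝ is nondegenerate and compatible with the product metric, i.e. ω̄(X, J Y) = g(X, Y) defines an almost complex structure J with J² = −Id. -/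

import Mathlib

/-- `ω̄ = ds ∧ θ + dθ` is nondegenerate and compatible with the
product metric; pointwise formulation.
`V` models the tangent space of `M` at a point, with the compatible Riemannian
metric given by the inner product.  `θ` and `ω` are the values of the contact
form and of `dθ`; `E` is the Reeb vector (`θ E = 1`, `ι_E ω = 0`), of unit
length and orthogonal to `𝓗 = ker θ`; `I` is the compatible complex structure
on `𝓗` (`ω(v, I w) = ⟪v,w⟫`, `I² = -Id` on `𝓗`).  The tangent space of `M × ℝ`
is `V × ℝ` with the product inner product `⟪(v,a),(w,b)⟫ = ⟪v,w⟫ + a b`, and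
`ω̄((v,a),(w,b)) = a·θ w - b·θ v + ω v w`.
Conclusion: `ω̄` is nondegenerate, and there is `J` with `ω̄(X, J Y) = ⟪X,Y⟫`
and `J² = -Id`. -/
theorem stmt3 (n : ℕ) (V : Type*) [NormedAddCommGroup V] [InnerProductSpace ℝ V]
    [FiniteDimensional ℝ V] (hdim : Module.finrank ℝ V = 2 * n + 1)
    (θ : V →ₗ[ℝ] ℝ) (ω : V →ₗ[ℝ] V →ₗ[ℝ] ℝ)
    (halt : ∀ v, ω v v = 0)
    (E : V) (hE1 : θ E = 1) (hE2 : ∀ w, ω E w = 0)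
    (hEnorm : ‖E‖ = 1) (hEorth : ∀ v, θ v = 0 → inner (𝕜 := ℝ) E v = 0)
    (I : V →ₗ[ℝ] V)
    (hI𝓗 : ∀ v, θ v = 0 → θ (I v) = 0)
    (hIsq : ∀ v, θ v = 0 → I (I v) = -v)
    (hIcompat : ∀ v w, θ v = 0 → θ w = 0 → ω v (I w) = inner (𝕜 := ℝ) v w)
    (ωbar : (V × ℝ) → (V × ℝ) → ℝ)
    (hωbar : ∀ X Y, ωbar X Y = X.2 * θ Y.1 - Y.2 * θ X.1 + ω X.1 Y.1) :
    -- ω̄ is nondegenerate: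
    (∀ X : V × ℝ, (∀ Y : V × ℝ, ωbar X Y = 0) → X = 0) ∧
    -- ω̄ is compatible with the product metric:
    (∃ J : (V × ℝ) →ₗ[ℝ] (V × ℝ),
      (∀ X Y : V × ℝ, ωbar X (J Y) = inner (𝕜 := ℝ) X.1 Y.1 + X.2 * Y.2) ∧
      (∀ X : V × ℝ, J (J X) = -X)) := by
  have hθH : ∀ w : V, θ (w - θ w • E) = 0 := by intro w; simp [hE1]
  have hanti : ∀ v w : V, ω v w = - ω w v := by
    intro v w
    have h := halt (v + w)
    simp [map_add, halt] at h
    linarith [halt v, halt w]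
  have hEE : inner (𝕜 := ℝ) E E = (1:ℝ) := by
    rw [real_inner_self_eq_norm_sq, hEnorm]; norm_num
  have hEv : ∀ v : V, inner (𝕜 := ℝ) E v = θ v := by
    intro v
    have h := hEorth (v - θ v • E) (hθH v)
    simp [inner_sub_right, inner_smul_right, hEE, hEnorm] at h
    linarith
  have hinner : ∀ v w : V,
      inner (𝕜 := ℝ) (v - θ v • E) (w - θ w • E)
        = inner (𝕜 := ℝ) v w - θ v * θ w := by
    intro v w
    have h1 : inner (𝕜 := ℝ) v E = θ v := by rw [real_inner_comm]; exact hEv v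
    simp [inner_sub_left, inner_sub_right, inner_smul_left, inner_smul_right,
      hEE, hEv, h1, hEnorm]
  have hωvE : ∀ v : V, ω v E = 0 := by
    intro v
    have h := hanti v E
    rw [hE2] at h
    linarith
  -- the almost complex structure, built from linear-map combinators
  set P : V →ₗ[ℝ] V := LinearMap.id - θ.smulRight E with hP
  set J : (V × ℝ) →ₗ[ℝ] (V × ℝ) :=
    LinearMap.prod
      (I ∘ₗ (P ∘ₗ LinearMap.fst ℝ V ℝ) + (LinearMap.snd ℝ V ℝ).smulRight E)
      (- (θ ∘ₗ LinearMap.fst ℝ V ℝ)) with hJ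
  have hJapp : ∀ X : V × ℝ, J X = (I (X.1 - θ X.1 • E) + X.2 • E, -θ X.1) := by
    intro X
    simp [hJ, hP, LinearMap.prod_apply, LinearMap.smulRight_apply,
      LinearMap.sub_apply]
  have hJcompat : ∀ X Y : V × ℝ,
      ωbar X (J Y) = inner (𝕜 := ℝ) X.1 Y.1 + X.2 * Y.2 := by
    rintro ⟨v, a⟩ ⟨w, b⟩
    rw [hJapp, hωbar]
    have hθI : θ (I (w - θ w • E)) = 0 := hI𝓗 _ (hθH w)
    have hvw : ω (v - θ v • E) (I (w - θ w • E))
        = inner (𝕜 := ℝ) v w - θ v * θ w := by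
      rw [hIcompat _ _ (hθH v) (hθH w), hinner]
    have hsplit : ω v (I (w - θ w • E))
        = inner (𝕜 := ℝ) v w - θ v * θ w := by
      have h : ω v (I (w - θ w • E))
          = ω (v - θ v • E) (I (w - θ w • E)) + θ v * ω E (I (w - θ w • E)) := by
        simp only [map_sub, map_smul, LinearMap.sub_apply, LinearMap.smul_apply,
          smul_eq_mul]
        ring
      rw [h, hE2, hvw]
      ring
    simp only [map_add, map_smul, smul_eq_mul, hθI, hE1, hωvE, hsplit]
    ring
  refine ⟨?_, J, hJcompat, ?_⟩
  · -- nondegeneracy from compatibility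
    intro X hX
    have h := hX (J X)
    rw [hJcompat X X] at h
    have h1 : (0:ℝ) ≤ inner (𝕜 := ℝ) X.1 X.1 := real_inner_self_nonneg
    have h2 : (0:ℝ) ≤ X.2 * X.2 := mul_self_nonneg _
    have hx1 : inner (𝕜 := ℝ) X.1 X.1 = (0:ℝ) := by linarith
    have hx2 : X.2 * X.2 = 0 := by linarith
    have hX1 : X.1 = 0 := by
      rwa [real_inner_self_eq_norm_sq, pow_eq_zero_iff (by norm_num),
        norm_eq_zero] at hx1
    exact Prod.ext hX1 (by simpa using mul_self_eq_zero.mp hx2)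
  · -- J² = -1
    rintro ⟨v, a⟩
    rw [hJapp, hJapp]
    have hθI : θ (I (v - θ v • E)) = 0 := hI𝓗 _ (hθH v)
    have h1 : θ (I (v - θ v • E) + a • E) = a := by
      rw [map_add, map_smul, hθI, hE1, smul_eq_mul, mul_one, zero_add]
    refine Prod.ext ?_ ?_
    · show I ((I (v - θ v • E) + a • E) - θ (I (v - θ v • E) + a • E) • E)
        + (-θ v) • E = (-(v, a)).1
      rw [h1]
      have h2 : (I (v - θ v • E) + a • E) - a • E = I (v - θ v • E) := by abel
      rw [h2, hIsq _ (hθH v)]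
      show -(v - θ v • E) + (-θ v) • E = -v
      module
    · show -θ (I (v - θ v • E) + a • E) = (-(v, a)).2
      rw [h1]
      rfl
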